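/- Consider a network of m RFMIOs with feedback inputs u^i = c^i_0 + Σ_{k=1}^m c^i_k y^k, where c^i_0 > 0 and c^i_k ≥ 0, and let F : ℝ^ℓ → ℝ^ℓ denote its vector field. Then the closed cube [0,1]^ℓ is an invariant set, and solutions immediately enter the open cube: if z : [0,∞) → ℝ^ℓ is differentiable with ż(t) = F(z(t)) for all t ≥ 0 and z(0) ∈ [0,1]^ℓ, then z(t) ∈ [0,1]^ℓ for all t ≥ 0 and z(t) ∈ (0,1)^ℓ for all t > 0. -/

import Mathlib

open scoped BigOperators

/-- Extended occupancy vector of an RFM chain with `N + 1` sites: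
the input value `u` at the left boundary, the state in the middle,
and `0` at the right boundary. -/
noncomputable def rfmExt {N : ℕ} (u : ℝ) (x : Fin (N + 1) → ℝ) : Fin (N + 3) → ℝ :=
  Fin.cons u (Fin.snoc x 0)

/-- The flow into site `j` (so `j = 0` is the entry flow `λ₀ u (1 - x₁)`,
`j` internal is `λ_j x_j (1 - x_{j+1})` in 1-based notation,
and `j = N + 1` is the exit flow `λ_n x_n`). -/
noncomputable def rfmFlow {N : ℕ} (lam : Fin (N + 2) → ℝ) (u : ℝ)
    (x : Fin (N + 1) → ℝ) (j : Fin (N + 2)) : ℝ :=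
  lam j * rfmExt u x j.castSucc * (1 - rfmExt u x j.succ)

/-- The vector field of a single RFMIO chain with input `u`. -/
noncomputable def rfmVF {N : ℕ} (lam : Fin (N + 2) → ℝ) (u : ℝ)
    (x : Fin (N + 1) → ℝ) (j : Fin (N + 1)) : ℝ :=
  rfmFlow lam u x j.castSucc - rfmFlow lam u x j.succ

/-- The steady-state equations of an RFM chain with input `u`: all flows are equal,
i.e. `λ₀ u (1-e₁) = λ₁ e₁ (1-e₂) = ⋯ = λ_n e_n`. -/
def rfmSS {N : ℕ} (lam : Fin (N + 2) → ℝ) (u : ℝ) (e : Fin (N + 1) → ℝ) : Prop :=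
  ∀ j : Fin (N + 1), rfmFlow lam u e j.castSucc = rfmFlow lam u e j.succ

/-- The input to RFMIO `i` in the network: `u^i = c^i_0 + ∑_k c^i_k y^k`,
where `y^k = λ^k_{n^k} x^k_{n^k}` is the output of RFMIO `k`. -/
noncomputable def netInput {m : ℕ} {n : Fin m → ℕ}
    (lam : ∀ i : Fin m, Fin (n i + 2) → ℝ)
    (c0 : Fin m → ℝ) (c : Fin m → Fin m → ℝ)
    (z : ∀ i : Fin m, Fin (n i + 1) → ℝ) (i : Fin m) : ℝ :=
  c0 i + ∑ k : Fin m, c i k * (lam k (Fin.last (n k + 1)) * z k (Fin.last (n k)))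

/-- The vector field of the network of `m` RFMIOs with feedback connections. -/
noncomputable def netVF {m : ℕ} {n : Fin m → ℕ}
    (lam : ∀ i : Fin m, Fin (n i + 2) → ℝ)
    (c0 : Fin m → ℝ) (c : Fin m → Fin m → ℝ)
    (z : ∀ i : Fin m, Fin (n i + 1) → ℝ) : ∀ i : Fin m, Fin (n i + 1) → ℝ :=
  fun i => rfmVF (lam i) (netInput lam c0 c z i) (z i)

/-- The network equilibrium equations. -/
def netSS {m : ℕ} {n : Fin m → ℕ}
    (lam : ∀ i : Fin m, Fin (n i + 2) → ℝ)
    (c0 : Fin m → ℝ) (c : Fin m → Fin m → ℝ)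
    (e : ∀ i : Fin m, Fin (n i + 1) → ℝ) : Prop :=
  ∀ i : Fin m, rfmSS (lam i) (netInput lam c0 c e i) (e i)

section Aux
set_option linter.unusedVariables false
set_option linter.unusedSectionVars false

open Set Filter Topology

-- the extended vector at the slot just left of site j.succ's "x j" cell etc.
lemma ext_mid {N : ℕ} (u : ℝ) (x : Fin (N + 1) → ℝ) (j : Fin (N + 1)) :
    rfmExt u x (j.castSucc.succ) = x j := by
  rw [rfmExt, Fin.cons_succ, Fin.snoc_castSucc]

lemma succ_castSucc' {N : ℕ} (j : Fin (N + 1)) :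
    (j.succ.castSucc : Fin (N + 3)) = j.castSucc.succ := by
  ext; simp

lemma vf_eq {N : ℕ} (lam : Fin (N + 2) → ℝ) (u : ℝ) (x : Fin (N + 1) → ℝ) (j : Fin (N + 1)) :
    rfmVF lam u x j =
      lam j.castSucc * rfmExt u x j.castSucc.castSucc * (1 - x j)
        - lam j.succ * x j * (1 - rfmExt u x j.succ.succ) := by
  rw [rfmVF, rfmFlow, rfmFlow, ext_mid, succ_castSucc', ext_mid]

lemma ext_cases {N : ℕ} (u : ℝ) (x : Fin (N + 1) → ℝ) (k : Fin (N + 3)) :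
    rfmExt u x k = u ∨ rfmExt u x k = 0 ∨ ∃ j, rfmExt u x k = x j := by
  induction k using Fin.cases with
  | zero => left; simp [rfmExt]
  | succ k =>
    induction k using Fin.lastCases with
    | last =>
      right; left
      rw [rfmExt, ← Fin.succ_last, Fin.cons_succ, Fin.succ_last, Fin.snoc_last]
    | cast k => right; right; exact ⟨k, by simp [rfmExt]⟩

-- P lemmas
lemma extP_zero {N : ℕ} (u : ℝ) (x : Fin (N + 1) → ℝ) :
    rfmExt u x ((0 : Fin (N + 1)).castSucc.castSucc) = u := by
  simp [rfmExt]

lemma extP_succ {N : ℕ} (u : ℝ) (x : Fin (N + 1) → ℝ) (j : Fin N) :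
    rfmExt u x ((j.succ : Fin (N+1)).castSucc.castSucc) = x j.castSucc := by
  have : ((j.succ : Fin (N+1)).castSucc.castSucc : Fin (N + 3))
      = ((j.castSucc.castSucc : Fin (N + 2)).succ) := by ext; simp
  rw [this, rfmExt, Fin.cons_succ]
  have : ((j.castSucc.castSucc : Fin (N + 2))) = ((j.castSucc : Fin (N+1)).castSucc) := by
    ext; simp
  rw [this, Fin.snoc_castSucc]

lemma extQ_cast {N : ℕ} (u : ℝ) (x : Fin (N + 1) → ℝ) (j : Fin N) :
    rfmExt u x ((j.castSucc : Fin (N+1)).succ.succ) = x j.succ := by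
  have : ((j.castSucc : Fin (N+1)).succ.succ : Fin (N + 3))
      = (((j.succ : Fin (N+1)).castSucc : Fin (N+2)).succ) := by ext; simp
  rw [this, rfmExt, Fin.cons_succ, Fin.snoc_castSucc]

lemma extQ_last {N : ℕ} (u : ℝ) (x : Fin (N + 1) → ℝ) :
    rfmExt u x ((Fin.last N).succ.succ) = 0 := by
  have : ((Fin.last N).succ.succ : Fin (N + 3)) = (Fin.last (N + 1)).succ := by ext; simp
  rw [this, rfmExt, Fin.cons_succ, Fin.snoc_last]

noncomputable def qdist (w : ℝ) : ℝ := max (w - 1) 0 + max (-w) 0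

lemma qdist_nonneg (w : ℝ) : 0 ≤ qdist w := by
  unfold qdist; positivity

lemma qdist_zero {w : ℝ} (h0 : 0 ≤ w) (h1 : w ≤ 1) : qdist w = 0 := by
  unfold qdist
  rw [max_eq_right (by linarith), max_eq_right (by linarith), add_zero]

lemma mem_of_qdist_zero {w : ℝ} (h : qdist w = 0) : w ∈ Set.Icc (0:ℝ) 1 := by
  unfold qdist at h
  have h1 : max (w - 1) 0 = 0 ∧ max (-w) 0 = 0 := by
    constructor <;> nlinarith [le_max_right (w-1) (0:ℝ), le_max_right (-w) (0:ℝ),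
      le_max_left (w-1) (0:ℝ), le_max_left (-w) (0:ℝ)]
  constructor
  · nlinarith [le_max_left (-w) (0:ℝ), h1.2]
  · nlinarith [le_max_left (w-1) (0:ℝ), h1.1]

lemma neg_le_qdist (w : ℝ) : -w ≤ qdist w := by
  unfold qdist
  nlinarith [le_max_left (-w) (0:ℝ), le_max_right (w-1) (0:ℝ)]

lemma sub_one_le_qdist (w : ℝ) : w - 1 ≤ qdist w := by
  unfold qdist
  nlinarith [le_max_left (w-1) (0:ℝ), le_max_right (-w) (0:ℝ)]

lemma qdist_le_one {w : ℝ} (h1 : -1 ≤ w) (h2 : w ≤ 2) : qdist w ≤ 1 := by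
  unfold qdist
  rcases le_total w 1 with h | h
  · rw [max_eq_right (by linarith)]
    rcases le_total w 0 with h' | h'
    · rw [max_eq_left (by linarith)]; linarith
    · rw [max_eq_right (by linarith)]; linarith
  · rw [max_eq_left (by linarith), max_eq_right (by linarith)]; linarith

lemma continuous_qdist : Continuous qdist := by
  unfold qdist; fun_prop

lemma qdist_diff_hi {a b : ℝ} (ha : 1 ≤ a) (hb : 0 ≤ b) :
    qdist b - qdist a ≤ max (b - a) 0 := by
  unfold qdist
  have h1 : max (-b) 0 = 0 := max_eq_right (by linarith)
  have h2 : max (a-1) 0 = a-1 := max_eq_left (by linarith)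
  have h3 : max (-a) 0 = 0 := max_eq_right (by linarith)
  rw [h1, h2, h3]
  rcases le_total (b-1) 0 with h | h
  · rw [max_eq_right h]; nlinarith [le_max_right (b-a) (0:ℝ)]
  · rw [max_eq_left h]; nlinarith [le_max_left (b-a) (0:ℝ)]

lemma qdist_diff_lo {a b : ℝ} (ha : a ≤ 0) (hb : b ≤ 1) :
    qdist b - qdist a ≤ max (a - b) 0 := by
  unfold qdist
  have h1 : max (b-1) 0 = 0 := max_eq_right (by linarith)
  have h2 : max (a-1) 0 = 0 := max_eq_right (by linarith)
  have h3 : max (-a) 0 = -a := max_eq_left (by linarith)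
  rw [h1, h2, h3]
  rcases le_total (-b) 0 with h | h
  · rw [max_eq_right h]; nlinarith [le_max_right (a-b) (0:ℝ)]
  · rw [max_eq_left h]; nlinarith [le_max_left (a-b) (0:ℝ)]

lemma coord_deriv {m : ℕ} {n : Fin m → ℕ} {z : ℝ → ∀ i : Fin m, Fin (n i + 1) → ℝ}
    {V : ∀ i : Fin m, Fin (n i + 1) → ℝ} {t : ℝ}
    (h : HasDerivAt z V t) (i : Fin m) (j : Fin (n i + 1)) :
    HasDerivAt (fun s => z s i j) (V i j) t := by
  have h1 : HasDerivAt (fun s => z s i) (V i) t :=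
    (ContinuousLinearMap.proj (R := ℝ) (φ := fun i : Fin m => Fin (n i + 1) → ℝ)
      i).hasFDerivAt.comp_hasDerivAt t h
  exact (ContinuousLinearMap.proj (R := ℝ) (φ := fun _ : Fin (n i + 1) => ℝ)
      j).hasFDerivAt.comp_hasDerivAt t h1

section Est
variable {m : ℕ} {n : Fin m → ℕ}
  (lam : ∀ i : Fin m, Fin (n i + 2) → ℝ)
  (c0 : Fin m → ℝ) (c : Fin m → Fin m → ℝ)

noncomputable def Phi (v : ∀ i : Fin m, Fin (n i + 1) → ℝ) : ℝ :=
  ∑ i : Fin m, ∑ j : Fin (n i + 1), qdist (v i j)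

noncomputable def Unet (i : Fin m) : ℝ := ∑ k : Fin m, c i k * lam k (Fin.last (n k + 1))

noncomputable def Knet (i : Fin m) (j : Fin (n i + 1)) : ℝ :=
  2 * lam i j.castSucc * (Unet lam c i + 1) + 2 * lam i j.succ

variable {lam c0 c}
variable (hlam : ∀ (i : Fin m) (j : Fin (n i + 2)), 0 < lam i j)
  (hc0 : ∀ i, 0 < c0 i) (hc : ∀ i k, 0 ≤ c i k)

lemma Phi_nonneg (v : ∀ i : Fin m, Fin (n i + 1) → ℝ) : 0 ≤ Phi v :=
  Finset.sum_nonneg fun i _ => Finset.sum_nonneg fun j _ => qdist_nonneg _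

lemma qdist_le_Phi (v : ∀ i : Fin m, Fin (n i + 1) → ℝ) (i : Fin m) (j : Fin (n i + 1)) :
    qdist (v i j) ≤ Phi v := by
  have h1 : qdist (v i j) ≤ ∑ j', qdist (v i j') :=
    Finset.single_le_sum (fun j' _ => qdist_nonneg _) (Finset.mem_univ j)
  exact h1.trans (Finset.single_le_sum
    (f := fun i' => ∑ j' : Fin (n i' + 1), qdist (v i' j'))
    (fun i' _ => Finset.sum_nonneg fun j' _ => qdist_nonneg _) (Finset.mem_univ i))

include hlam hc in
lemma Unet_nonneg (i : Fin m) : 0 ≤ Unet lam c i :=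
  Finset.sum_nonneg fun k _ => mul_nonneg (hc i k) (hlam k _).le

include hlam hc0 hc in
lemma neg_netInput_le (v : ∀ i : Fin m, Fin (n i + 1) → ℝ) (i : Fin m) :
    -(netInput lam c0 c v i) ≤ Unet lam c i * Phi v := by
  rw [netInput, Unet, Finset.sum_mul, neg_add]
  have h0 : -c0 i ≤ 0 := by linarith [hc0 i]
  calc -c0 i + -∑ k : Fin m, c i k * (lam k (Fin.last (n k + 1)) * v k (Fin.last (n k)))
      ≤ ∑ k : Fin m, c i k * lam k (Fin.last (n k + 1)) * Phi v := by
        rw [← Finset.sum_neg_distrib]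
        refine add_le_of_nonpos_of_le h0 (Finset.sum_le_sum fun k _ => ?_)
        have hq : -(v k (Fin.last (n k))) ≤ Phi v :=
          (neg_le_qdist _).trans (qdist_le_Phi v k _)
        have hcl : 0 ≤ c i k * lam k (Fin.last (n k + 1)) :=
          mul_nonneg (hc i k) (hlam k _).le
        calc -(c i k * (lam k (Fin.last (n k + 1)) * v k (Fin.last (n k))))
            = c i k * lam k (Fin.last (n k + 1)) * (-(v k (Fin.last (n k)))) := by ring
          _ ≤ c i k * lam k (Fin.last (n k + 1)) * Phi v := by
              exact mul_le_mul_of_nonneg_left hq hcl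
    _ = _ := rfl

include hlam hc0 hc in
lemma neg_ext_le (v : ∀ i : Fin m, Fin (n i + 1) → ℝ) (i : Fin m) (k : Fin (n i + 3)) :
    -(rfmExt (netInput lam c0 c v i) (v i) k) ≤ (Unet lam c i + 1) * Phi v := by
  have hU := Unet_nonneg hlam hc i
  have hP := Phi_nonneg v
  rcases ext_cases (netInput lam c0 c v i) (v i) k with h | h | ⟨j, h⟩ <;> rw [h]
  · exact (neg_netInput_le hlam hc0 hc v i).trans (by nlinarith)
  · simpa using mul_nonneg (by linarith) hP
  · exact ((neg_le_qdist _).trans (qdist_le_Phi v i j)).trans (by nlinarith)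

lemma ext_succ_cases {N : ℕ} (u : ℝ) (x : Fin (N + 1) → ℝ) (k : Fin (N + 2)) :
    rfmExt u x k.succ = 0 ∨ ∃ j, rfmExt u x k.succ = x j := by
  rw [rfmExt, Fin.cons_succ]
  induction k using Fin.lastCases with
  | last => left; rw [Fin.snoc_last]
  | cast k => right; exact ⟨k, by rw [Fin.snoc_castSucc]⟩

lemma ext_succ_sub_one_le (v : ∀ i : Fin m, Fin (n i + 1) → ℝ) (i : Fin m)
    (k : Fin (n i + 2)) :
    rfmExt (netInput lam c0 c v i) (v i) k.succ - 1 ≤ Phi v := by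
  have hP := Phi_nonneg v
  rcases ext_succ_cases (netInput lam c0 c v i) (v i) k with h | ⟨j, h⟩ <;> rw [h]
  · linarith
  · exact (sub_one_le_qdist _).trans (qdist_le_Phi v i j)

include hlam hc0 hc in
lemma est_hi (v : ∀ i : Fin m, Fin (n i + 1) → ℝ)
    (hv : ∀ i j, v i j ∈ Set.Icc (-1:ℝ) 2) (i : Fin m) (j : Fin (n i + 1))
    (hw : 1 ≤ v i j) :
    netVF lam c0 c v i j ≤ Knet lam c i j * Phi v := by
  have hP := neg_ext_le hlam hc0 hc v i (j.castSucc.castSucc)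
  have hQ := ext_succ_sub_one_le (lam := lam) (c0 := c0) (c := c) v i j.succ
  have hU := Unet_nonneg hlam hc i
  have hF := Phi_nonneg v
  have hw2 := (hv i j).2
  have hla := hlam i j.castSucc
  have hlb := hlam i j.succ
  rw [netVF, vf_eq, Knet]
  set P := rfmExt (netInput lam c0 c v i) (v i) (j.castSucc.castSucc) with hPdef
  set Q := rfmExt (netInput lam c0 c v i) (v i) (j.succ.succ) with hQdef
  set A := (Unet lam c i + 1) * Phi v with hAdef
  have hA : 0 ≤ A := mul_nonneg (by linarith) hF
  nlinarith [mul_nonneg (hlam i j.castSucc).le (mul_nonneg (by linarith : (0:ℝ) ≤ A + P) (by linarith : (0:ℝ) ≤ v i j - 1)),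
    mul_nonneg (hlam i j.succ).le (mul_nonneg (by linarith : (0:ℝ) ≤ Phi v - (Q - 1)) (by linarith : (0:ℝ) ≤ v i j)),
    mul_nonneg (hlam i j.castSucc).le (mul_nonneg hA (by linarith : (0:ℝ) ≤ 2 - v i j)),
    mul_nonneg (hlam i j.succ).le (mul_nonneg hF (by linarith : (0:ℝ) ≤ 2 - v i j)),
    mul_nonneg (hlam i j.castSucc).le hA]

include hlam hc0 hc in
lemma est_lo (v : ∀ i : Fin m, Fin (n i + 1) → ℝ)
    (hv : ∀ i j, v i j ∈ Set.Icc (-1:ℝ) 2) (i : Fin m) (j : Fin (n i + 1))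
    (hw : v i j ≤ 0) :
    -(netVF lam c0 c v i j) ≤ Knet lam c i j * Phi v := by
  have hP := neg_ext_le hlam hc0 hc v i (j.castSucc.castSucc)
  have hQ := ext_succ_sub_one_le (lam := lam) (c0 := c0) (c := c) v i j.succ
  have hU := Unet_nonneg hlam hc i
  have hF := Phi_nonneg v
  have hw1 := (hv i j).1
  have hla := hlam i j.castSucc
  have hlb := hlam i j.succ
  rw [netVF, vf_eq, Knet]
  set P := rfmExt (netInput lam c0 c v i) (v i) (j.castSucc.castSucc) with hPdef
  set Q := rfmExt (netInput lam c0 c v i) (v i) (j.succ.succ) with hQdef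
  set A := (Unet lam c i + 1) * Phi v with hAdef
  have hA : 0 ≤ A := mul_nonneg (by linarith) hF
  nlinarith [mul_nonneg (hlam i j.succ).le (mul_nonneg (by linarith : (0:ℝ) ≤ Phi v - (Q - 1)) (by linarith : (0:ℝ) ≤ -(v i j))),
    mul_nonneg (hlam i j.succ).le (mul_nonneg hF (by linarith : (0:ℝ) ≤ 1 + v i j)),
    mul_nonneg (hlam i j.castSucc).le (mul_nonneg (by linarith : (0:ℝ) ≤ A + P) (by linarith : (0:ℝ) ≤ 1 - v i j)),
    mul_nonneg (hlam i j.castSucc).le (mul_nonneg hA (by linarith : (0:ℝ) ≤ 1 + v i j)),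
    mul_nonneg (hlam i j.succ).le hF]

end Est

lemma Knet_nonneg {m : ℕ} {n : Fin m → ℕ} {lam : ∀ i : Fin m, Fin (n i + 2) → ℝ}
    {c : Fin m → Fin m → ℝ}
    (hlam : ∀ (i : Fin m) (j : Fin (n i + 2)), 0 < lam i j)
    (hc : ∀ i k, 0 ≤ c i k) (i : Fin m) (j : Fin (n i + 1)) : 0 ≤ Knet lam c i j := by
  have h1 := hlam i j.castSucc
  have h2 := hlam i j.succ
  have h3 := Unet_nonneg hlam hc i
  rw [Knet]; nlinarith

set_option maxHeartbeats 400000 in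
lemma part1_interval {m : ℕ} {n : Fin m → ℕ} {lam : ∀ i : Fin m, Fin (n i + 2) → ℝ}
    {c0 : Fin m → ℝ} {c : Fin m → Fin m → ℝ}
    (hlam : ∀ (i : Fin m) (j : Fin (n i + 2)), 0 < lam i j)
    (hc0 : ∀ i, 0 < c0 i) (hc : ∀ i k, 0 ≤ c i k)
    {z : ℝ → ∀ i : Fin m, Fin (n i + 1) → ℝ}
    (hz : ∀ t : ℝ, 0 ≤ t → HasDerivAt z (netVF lam c0 c (z t)) t)
    (hz0 : ∀ i j, z 0 i j ∈ Set.Icc (0 : ℝ) 1)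
    (b : ℝ) (hb : 0 ≤ b)
    (H2 : ∀ s ∈ Set.Icc 0 b, ∀ i j, z s i j ∈ Set.Icc (-1:ℝ) 2) :
    ∀ s ∈ Set.Icc 0 b, ∀ i j, z s i j ∈ Set.Icc (0:ℝ) 1 := by
  classical
  set K : ℝ := ∑ i : Fin m, ∑ j : Fin (n i + 1), Knet lam c i j with hK
  set Lr : ℝ := ∑ i : Fin m, ∑ _j : Fin (n i + 1), (1:ℝ) with hLr
  have hLr0 : 0 ≤ Lr := Finset.sum_nonneg fun i _ => Finset.sum_nonneg fun j _ => zero_le_one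
  -- continuity
  have cont_coord : ∀ (i : Fin m) (j : Fin (n i + 1)),
      ContinuousOn (fun t => z t i j) (Set.Icc 0 b) := fun i j t ht =>
    ((coord_deriv (hz t ht.1) i j).continuousAt).continuousWithinAt
  have contPhi : ContinuousOn (fun t => Phi (z t)) (Set.Icc 0 b) := by
    unfold Phi
    apply continuousOn_finset_sum
    intro i _
    apply continuousOn_finset_sum
    intro j _
    exact continuous_qdist.comp_continuousOn (cont_coord i j)
  -- initial
  have ha : Phi (z 0) ≤ 0 := by
    unfold Phi
    refine le_of_eq (Finset.sum_eq_zero fun i _ => Finset.sum_eq_zero fun j _ => ?_)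
    exact qdist_zero (hz0 i j).1 (hz0 i j).2
  -- key slope estimate
  have key : ∀ x ∈ Set.Ico 0 b, ∀ r, K * Phi (z x) < r →
      ∃ᶠ s in 𝓝[>] x, (s - x)⁻¹ * (Phi (z s) - Phi (z x)) < r := by
    intro x hx r hr
    have hx0 : 0 ≤ x := hx.1
    have hC2x : ∀ i j, z x i j ∈ Set.Icc (-1:ℝ) 2 := H2 x ⟨hx.1, hx.2.le⟩
    set δ' : ℝ := (r - K * Phi (z x)) / (Lr + 1) with hδ'
    have hδp : 0 < δ' := div_pos (by linarith) (by linarith)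
    have percoord : ∀ (i : Fin m) (j : Fin (n i + 1)), ∀ᶠ s in 𝓝[>] x,
        qdist (z s i j) - qdist (z x i j)
          ≤ (s - x) * (Knet lam c i j * Phi (z x) + δ') := by
      intro i j
      set g : ℝ := Knet lam c i j * Phi (z x) with hg
      have hg0 : 0 ≤ g := mul_nonneg (Knet_nonneg hlam hc i j) (Phi_nonneg _)
      have hW : HasDerivAt (fun s => z s i j) (netVF lam c0 c (z x) i j) x :=
        coord_deriv (hz x hx0) i j
      set V : ℝ := netVF lam c0 c (z x) i j with hV
      have hslope : Tendsto (slope (fun s => z s i j) x) (𝓝[>] x) (𝓝 V) :=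
        (hasDerivAt_iff_tendsto_slope.mp hW).mono_left
          (nhdsWithin_mono x fun s hs => ne_of_gt hs)
      have hcont : Tendsto (fun s => z s i j) (𝓝[>] x) (𝓝 (z x i j)) :=
        (hW.continuousAt).tendsto.mono_left nhdsWithin_le_nhds
      have hmem : ∀ᶠ s in 𝓝[>] x, x < s := eventually_mem_nhdsWithin
      rcases le_or_gt 1 (z x i j) with h1 | h1
      · have hVg : V ≤ g := est_hi hlam hc0 hc (z x) hC2x i j h1
        have e1 : ∀ᶠ s in 𝓝[>] x, slope (fun s => z s i j) x s < g + δ' :=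
          hslope.eventually_lt_const (by linarith)
        have e2 : ∀ᶠ s in 𝓝[>] x, 0 ≤ z s i j := by
          filter_upwards [hcont.eventually_const_lt (show (0:ℝ) < z x i j by linarith)]
            with s hs using hs.le
        filter_upwards [e1, e2, hmem] with s hs1 hs2 hs3
        have hsx : 0 < s - x := sub_pos.2 hs3
        refine (qdist_diff_hi h1 hs2).trans ?_
        rw [slope_def_field, div_lt_iff₀ hsx] at hs1
        have h0 : 0 ≤ (g + δ') * (s - x) := mul_nonneg (by linarith) hsx.le
        rw [mul_comm]
        exact max_le (le_of_lt hs1) h0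
      rcases le_or_gt (z x i j) 0 with h0 | h0
      · have hVg : -V ≤ g := est_lo hlam hc0 hc (z x) hC2x i j h0
        have e1 : ∀ᶠ s in 𝓝[>] x, -(g + δ') < slope (fun s => z s i j) x s :=
          hslope.eventually_const_lt (by linarith)
        have e2 : ∀ᶠ s in 𝓝[>] x, z s i j ≤ 1 := by
          filter_upwards [hcont.eventually_lt_const (show z x i j < 1 by linarith)]
            with s hs using hs.le
        filter_upwards [e1, e2, hmem] with s hs1 hs2 hs3
        have hsx : 0 < s - x := sub_pos.2 hs3
        refine (qdist_diff_lo h0 hs2).trans ?_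
        rw [slope_def_field] at hs1
        have hne : s - x ≠ 0 := ne_of_gt hsx
        have hs1' : z x i j - z s i j < (g + δ') * (s - x) := by
          have h := mul_lt_mul_of_pos_right hs1 hsx
          rw [div_mul_cancel₀ _ hne] at h
          linarith
        have h0' : 0 ≤ (g + δ') * (s - x) := mul_nonneg (by linarith) hsx.le
        rw [mul_comm]
        exact max_le hs1'.le h0'
      · have e2 : ∀ᶠ s in 𝓝[>] x, 0 < z s i j ∧ z s i j < 1 :=
          (hcont.eventually_const_lt h0).and (hcont.eventually_lt_const h1)
        filter_upwards [e2, hmem] with s hs2 hs3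
        have hsx : 0 < s - x := sub_pos.2 hs3
        rw [qdist_zero hs2.1.le hs2.2.le, qdist_zero h0.le h1.le]
        have h0' : 0 ≤ (s - x) * (g + δ') := mul_nonneg hsx.le (by linarith)
        linarith
    have hall : ∀ᶠ s in 𝓝[>] x, ∀ i j,
        qdist (z s i j) - qdist (z x i j)
          ≤ (s - x) * (Knet lam c i j * Phi (z x) + δ') :=
      Filter.eventually_all.2 fun i => Filter.eventually_all.2 fun j => percoord i j
    refine (Filter.Eventually.frequently ?_)
    filter_upwards [hall, eventually_mem_nhdsWithin] with s hs hsx'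
    have hsx : 0 < s - x := sub_pos.2 hsx'
    have hsum : Phi (z s) - Phi (z x)
        ≤ (s - x) * (K * Phi (z x) + Lr * δ') := by
      have h1 : Phi (z s) - Phi (z x)
          = ∑ i : Fin m, ∑ j : Fin (n i + 1), (qdist (z s i j) - qdist (z x i j)) := by
        unfold Phi
        rw [← Finset.sum_sub_distrib]
        exact Finset.sum_congr rfl fun i _ => (Finset.sum_sub_distrib _ _).symm
      rw [h1]
      have h2 : ∑ i : Fin m, ∑ j : Fin (n i + 1),
          (s - x) * (Knet lam c i j * Phi (z x) + δ')
          = (s - x) * (K * Phi (z x) + Lr * δ') := by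
        simp only [hK, hLr, Finset.sum_mul, Finset.mul_sum, mul_add, one_mul,
          Finset.sum_add_distrib]
      rw [← h2]
      exact Finset.sum_le_sum fun i _ => Finset.sum_le_sum fun j _ => hs i j
    have hlt : K * Phi (z x) + Lr * δ' < r := by
      have hne1 : Lr + 1 ≠ 0 := by linarith
      have : (Lr + 1) * δ' = r - K * Phi (z x) := by
        rw [hδ', mul_comm, div_mul_cancel₀ _ hne1]
      nlinarith
    calc (s - x)⁻¹ * (Phi (z s) - Phi (z x))
        ≤ (s - x)⁻¹ * ((s - x) * (K * Phi (z x) + Lr * δ')) := by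
          exact mul_le_mul_of_nonneg_left hsum (by positivity)
      _ = K * Phi (z x) + Lr * δ' := by
          field_simp
      _ < r := hlt
  have grb := le_gronwallBound_of_liminf_deriv_right_le
    (f := fun t => Phi (z t)) (f' := fun t => K * Phi (z t)) (δ := 0) (K := K) (ε := 0)
    (a := 0) (b := b) contPhi key ha (fun x _ => by simp)
  intro s hs i j
  have hPhis : Phi (z s) ≤ 0 := by
    have := grb s hs
    rwa [gronwallBound_ε0, zero_mul] at this
  have hPhi0 : Phi (z s) = 0 := le_antisymm hPhis (Phi_nonneg _)
  have hq : qdist (z s i j) = 0 := by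
    have h := qdist_le_Phi (z s) i j
    have := qdist_nonneg (z s i j)
    linarith
  exact mem_of_qdist_zero hq

lemma part1_global {m : ℕ} {n : Fin m → ℕ} {lam : ∀ i : Fin m, Fin (n i + 2) → ℝ}
    {c0 : Fin m → ℝ} {c : Fin m → Fin m → ℝ}
    (hlam : ∀ (i : Fin m) (j : Fin (n i + 2)), 0 < lam i j)
    (hc0 : ∀ i, 0 < c0 i) (hc : ∀ i k, 0 ≤ c i k)
    {z : ℝ → ∀ i : Fin m, Fin (n i + 1) → ℝ}
    (hz : ∀ t : ℝ, 0 ≤ t → HasDerivAt z (netVF lam c0 c (z t)) t)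
    (hz0 : ∀ i j, z 0 i j ∈ Set.Icc (0 : ℝ) 1) :
    ∀ t : ℝ, 0 ≤ t → ∀ i j, z t i j ∈ Set.Icc (0:ℝ) 1 := by
  intro τ hτ
  set B : Set ℝ := {t | t ∈ Set.Icc 0 τ ∧
    ∀ s ∈ Set.Icc 0 t, ∀ i j, z s i j ∈ Set.Icc (-1:ℝ) 2} with hB
  have sub12 : ∀ {w : ℝ}, w ∈ Set.Icc (0:ℝ) 1 → w ∈ Set.Icc (-1:ℝ) 2 := by
    rintro w ⟨h1, h2⟩; exact ⟨by linarith, by linarith⟩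
  have h0B : (0:ℝ) ∈ B := by
    refine ⟨⟨le_refl 0, hτ⟩, fun s hs i j => ?_⟩
    have : s = 0 := le_antisymm hs.2 hs.1
    rw [this]; exact sub12 (hz0 i j)
  have hne : B.Nonempty := ⟨0, h0B⟩
  have hbdd : BddAbove B := ⟨τ, fun t ht => ht.1.2⟩
  set σ := sSup B with hσ
  have hσ0 : 0 ≤ σ := le_csSup hbdd h0B
  have hστ : σ ≤ τ := csSup_le hne fun t ht => ht.1.2
  -- σ ∈ B (i.e. [-1,2] membership up to σ)
  have hmemB : ∀ s ∈ Set.Icc 0 σ, ∀ i j, z s i j ∈ Set.Icc (-1:ℝ) 2 := by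
    intro s hs i j
    rcases lt_or_eq_of_le hs.2 with hlt | heq
    · obtain ⟨t, htB, hst⟩ := exists_lt_of_lt_csSup hne hlt
      exact htB.2 s ⟨hs.1, hst.le⟩ i j
    · -- s = σ : limit point argument
      rcases eq_or_lt_of_le hσ0 with h0 | h0
      · have : s = 0 := by rw [heq, ← h0]
        rw [this]; exact sub12 (hz0 i j)
      · have hconts : ContinuousAt (fun s' => z s' i j) σ :=
          (coord_deriv (hz σ hσ0) i j).continuousAt
        have htend : Tendsto (fun s' => z s' i j) (𝓝[<] σ) (𝓝 (z σ i j)) :=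
          hconts.tendsto.mono_left nhdsWithin_le_nhds
        have hev : ∀ᶠ s' in 𝓝[<] σ, z s' i j ∈ Set.Icc (-1:ℝ) 2 := by
          have hIoo : Set.Ioo 0 σ ∈ 𝓝[<] σ :=
            Ioo_mem_nhdsLT_of_mem ⟨h0, le_refl σ⟩
          filter_upwards [hIoo] with s' hs'
          obtain ⟨t, htB, hst⟩ := exists_lt_of_lt_csSup hne hs'.2
          exact htB.2 s' ⟨hs'.1.le, hst.le⟩ i j
        have := isClosed_Icc.mem_of_tendsto htend hev
        rw [heq]; exact this
  have hcube : ∀ s ∈ Set.Icc 0 σ, ∀ i j, z s i j ∈ Set.Icc (0:ℝ) 1 :=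
    part1_interval hlam hc0 hc hz hz0 σ hσ0 hmemB
  -- show σ = τ
  rcases eq_or_lt_of_le hστ with heq | hlt
  · exact hcube τ ⟨hτ, by rw [heq]⟩
  · exfalso
    -- coordinates eventually in (-1,2) near σ
    have hev : ∀ᶠ s in 𝓝 σ, ∀ i j, z s i j ∈ Set.Icc (-1:ℝ) 2 := by
      rw [Filter.eventually_all]
      intro i
      rw [Filter.eventually_all]
      intro j
      have hconts : ContinuousAt (fun s' => z s' i j) σ :=
        (coord_deriv (hz σ hσ0) i j).continuousAt
      have hmem := hcube σ ⟨hσ0, le_refl σ⟩ i j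
      have e1 : ∀ᶠ s in 𝓝 σ, -1 < z s i j :=
        hconts.tendsto.eventually_const_lt (by linarith [hmem.1])
      have e2 : ∀ᶠ s in 𝓝 σ, z s i j < 2 :=
        hconts.tendsto.eventually_lt_const (by linarith [hmem.2])
      filter_upwards [e1, e2] with s h1 h2 using ⟨h1.le, h2.le⟩
    rw [Metric.eventually_nhds_iff] at hev
    obtain ⟨ε, hε, hball⟩ := hev
    set t' := min τ (σ + ε/2) with ht'
    have hσt' : σ < t' := lt_min hlt (by linarith)
    have ht'B : t' ∈ B := by
      refine ⟨⟨by linarith, min_le_left _ _⟩, fun s hs i j => ?_⟩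
      rcases le_or_gt s σ with hsσ | hsσ
      · exact hmemB s ⟨hs.1, hsσ⟩ i j
      · have hd : dist s σ < ε := by
          rw [Real.dist_eq, abs_of_pos (by linarith)]
          have : s ≤ σ + ε/2 := le_trans hs.2 (min_le_right _ _)
          linarith
        exact hball hd i j
    have := le_csSup hbdd ht'B
    rw [← hσ] at this
    linarith

lemma pos_lemma {w w' : ℝ → ℝ} {t0 t1 ε a : ℝ} (h01 : t0 < t1) (hε : 0 < ε) (ha : 0 < a)
    (hw : ∀ t ∈ Set.Icc t0 t1, HasDerivAt w (w' t) t)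
    (h0 : 0 ≤ w t0)
    (hd : ∀ t ∈ Set.Icc t0 t1, w t ≤ ε → a ≤ w' t) :
    0 < w t1 := by
  set C : ℝ := a / (2 * ε) with hC
  have hCpos : 0 < C := by positivity
  have hεC : ε * C = a / 2 := by rw [hC]; field_simp
  set B : ℝ → ℝ := fun t => ε * (1 - Real.exp (-C * (t - t0))) with hBdef
  have hBd : ∀ t : ℝ, HasDerivAt B (ε * (C * Real.exp (-C * (t - t0)))) t := by
    intro t
    have h1 : HasDerivAt (fun t : ℝ => -C * (t - t0)) (-C) t := by
      simpa using ((hasDerivAt_id t).sub_const t0).const_mul (-C)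
    have h3 := (h1.exp.const_sub 1).const_mul ε
    exact h3.congr_deriv (by ring)
  have key : ∀ x ∈ Set.Icc t0 t1, -w x ≤ -B x := by
    apply image_le_of_deriv_right_lt_deriv_boundary
      (f := fun t => -w t) (f' := fun t => -(w' t))
      (B := fun t => -B t) (B' := fun t => -(ε * (C * Real.exp (-C * (t - t0)))))
    · intro x hx
      exact ((hw x hx).continuousAt.neg).continuousWithinAt
    · intro x hx
      exact ((hw x ⟨hx.1, hx.2.le⟩).neg).hasDerivWithinAt
    · simp [hBdef, h0]
    · intro x
      exact (hBd x).neg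
    · intro x hx hfB
      have hwB : w x = B x := by
        have : -w x = -B x := hfB
        linarith
      have hexp : 0 < Real.exp (-C * (x - t0)) := Real.exp_pos _
      have hBle : B x ≤ ε := by
        rw [hBdef]; simp only; nlinarith
      have hwle : w x ≤ ε := by rw [hwB]; exact hBle
      have haw := hd x ⟨hx.1, hx.2.le⟩ hwle
      have hexple : Real.exp (-C * (x - t0)) ≤ 1 := by
        rw [Real.exp_le_one_iff]
        nlinarith [hx.1]
      have : ε * (C * Real.exp (-C * (x - t0))) ≤ a / 2 := by
        calc ε * (C * Real.exp (-C * (x - t0))) = ε * C * Real.exp (-C * (x - t0)) := by ring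
          _ ≤ ε * C * 1 := by
              apply mul_le_mul_of_nonneg_left hexple (by positivity)
          _ = a / 2 := by rw [mul_one, hεC]
      linarith
  have hfin := key t1 ⟨h01.le, le_refl t1⟩
  have hexp1 : Real.exp (-C * (t1 - t0)) < 1 := by
    rw [Real.exp_lt_one_iff]
    nlinarith
  have hB1 : 0 < B t1 := by
    rw [hBdef]; simp only; nlinarith
  linarith

section Cube
variable {m : ℕ} {n : Fin m → ℕ} {lam : ∀ i : Fin m, Fin (n i + 2) → ℝ}
  {c0 : Fin m → ℝ} {c : Fin m → Fin m → ℝ}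
  (hlam : ∀ (i : Fin m) (j : Fin (n i + 2)), 0 < lam i j)
  (hc0 : ∀ i, 0 < c0 i) (hc : ∀ i k, 0 ≤ c i k)

lemma Unet_nonneg' (i : Fin m) : (∀ i k, 0 ≤ c i k) → (∀ (i : Fin m) (j : Fin (n i + 2)), 0 < lam i j) → 0 ≤ Unet lam c i :=
  fun hc hlam => Finset.sum_nonneg fun k _ => mul_nonneg (hc i k) (hlam k _).le

include hlam hc in
lemma netInput_ge (v : ∀ i : Fin m, Fin (n i + 1) → ℝ)
    (hv : ∀ i j, v i j ∈ Set.Icc (0:ℝ) 1) (i : Fin m) :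
    c0 i ≤ netInput lam c0 c v i := by
  rw [netInput]
  have : 0 ≤ ∑ k : Fin m, c i k * (lam k (Fin.last (n k + 1)) * v k (Fin.last (n k))) :=
    Finset.sum_nonneg fun k _ =>
      mul_nonneg (hc i k) (mul_nonneg (hlam k _).le (hv k _).1)
  linarith

include hlam hc in
lemma netInput_le (v : ∀ i : Fin m, Fin (n i + 1) → ℝ)
    (hv : ∀ i j, v i j ∈ Set.Icc (0:ℝ) 1) (i : Fin m) :
    netInput lam c0 c v i ≤ c0 i + Unet lam c i := by
  rw [netInput, Unet]
  have : ∀ k : Fin m, c i k * (lam k (Fin.last (n k + 1)) * v k (Fin.last (n k)))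
      ≤ c i k * lam k (Fin.last (n k + 1)) := by
    intro k
    have h1 := (hv k (Fin.last (n k))).2
    have h2 := (hv k (Fin.last (n k))).1
    have h3 := (hlam k (Fin.last (n k + 1)))
    nlinarith [hc i k, mul_nonneg (hc i k) h3.le, mul_le_mul_of_nonneg_left (mul_le_of_le_one_right h3.le h1) (hc i k)]
  linarith [Finset.sum_le_sum fun k (_ : k ∈ Finset.univ) => this k]

include hlam hc0 hc in
lemma ext_nonneg (v : ∀ i : Fin m, Fin (n i + 1) → ℝ)
    (hv : ∀ i j, v i j ∈ Set.Icc (0:ℝ) 1) (i : Fin m) (k : Fin (n i + 3)) :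
    0 ≤ rfmExt (netInput lam c0 c v i) (v i) k := by
  rcases ext_cases (netInput lam c0 c v i) (v i) k with h | h | ⟨j, h⟩ <;> rw [h]
  · linarith [netInput_ge (c0 := c0) hlam hc v hv i, hc0 i]
  · exact (hv i j).1

include hlam hc0 hc in
lemma ext_le (v : ∀ i : Fin m, Fin (n i + 1) → ℝ)
    (hv : ∀ i j, v i j ∈ Set.Icc (0:ℝ) 1) (i : Fin m) (k : Fin (n i + 3)) :
    rfmExt (netInput lam c0 c v i) (v i) k ≤ c0 i + Unet lam c i + 1 := by
  have hU := Unet_nonneg' (lam := lam) (c := c) i hc hlam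
  have hc0i := (hc0 i).le
  rcases ext_cases (netInput lam c0 c v i) (v i) k with h | h | ⟨j, h⟩ <;> rw [h]
  · linarith [netInput_le (c0 := c0) hlam hc v hv i]
  · linarith
  · linarith [(hv i j).2]

lemma extQ_mem (v : ∀ i : Fin m, Fin (n i + 1) → ℝ)
    (hv : ∀ i j, v i j ∈ Set.Icc (0:ℝ) 1) (i : Fin m) (k : Fin (n i + 2)) :
    rfmExt (netInput lam c0 c v i) (v i) k.succ ∈ Set.Icc (0:ℝ) 1 := by
  rcases ext_succ_cases (netInput lam c0 c v i) (v i) k with h | ⟨j, h⟩ <;> rw [h]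
  · exact ⟨le_refl 0, zero_le_one⟩
  · exact hv i j

variable {z : ℝ → ∀ i : Fin m, Fin (n i + 1) → ℝ}
  (hz : ∀ t : ℝ, 0 ≤ t → HasDerivAt z (netVF lam c0 c (z t)) t)
  (hcube : ∀ t : ℝ, 0 ≤ t → ∀ i j, z t i j ∈ Set.Icc (0:ℝ) 1)

include hlam hc0 hc hz hcube in
lemma site_pos (i : Fin m) (s : Fin (n i + 1)) (t0 t1 bP : ℝ)
    (ht0 : 0 ≤ t0) (h01 : t0 < t1) (hbP : 0 < bP)
    (hP : ∀ t ∈ Set.Icc t0 t1,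
      bP ≤ rfmExt (netInput lam c0 c (z t) i) (z t i) (s.castSucc.castSucc)) :
    0 < z t1 i s := by
  have hla := hlam i s.castSucc
  have hlb := hlam i s.succ
  set ε : ℝ := min (1/2) (lam i s.castSucc * bP / (4 * lam i s.succ)) with hε
  have hεpos : 0 < ε := lt_min (by norm_num) (by positivity)
  have hεhalf : ε ≤ 1/2 := min_le_left _ _
  have h4 : lam i s.succ * ε ≤ lam i s.castSucc * bP / 4 := by
    calc lam i s.succ * ε ≤ lam i s.succ * (lam i s.castSucc * bP / (4 * lam i s.succ)) :=
          mul_le_mul_of_nonneg_left (min_le_right _ _) hlb.le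
      _ = lam i s.castSucc * bP / 4 := by field_simp
  apply pos_lemma (w := fun t => z t i s) (w' := fun t => netVF lam c0 c (z t) i s)
    h01 hεpos (show (0:ℝ) < lam i s.castSucc * bP / 4 by positivity)
  · intro t ht
    exact coord_deriv (hz t (le_trans ht0 ht.1)) i s
  · exact (hcube t0 ht0 i s).1
  · intro t ht hle
    have htpos : 0 ≤ t := le_trans ht0 ht.1
    have hcubet := hcube t htpos
    have hQ := extQ_mem (lam := lam) (c0 := c0) (c := c) (z t) hcubet i (s.succ)
    have hPt := hP t ht
    have hw0 := (hcubet i s).1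
    rw [netVF, vf_eq]
    set P := rfmExt (netInput lam c0 c (z t) i) (z t i) (s.castSucc.castSucc)
    set Q := rfmExt (netInput lam c0 c (z t) i) (z t i) (s.succ.succ)
    have hQ0 := hQ.1
    have hQ1 := hQ.2
    set w := z t i s
    nlinarith [mul_le_mul_of_nonneg_right hPt (show (0:ℝ) ≤ 1 - w by linarith),
      mul_nonneg (mul_nonneg hlb.le hw0) (show (0:ℝ) ≤ Q by linarith),
      mul_le_mul_of_nonneg_left hle hlb.le,
      mul_le_mul_of_nonneg_left (show (1:ℝ)/2 ≤ 1 - w by linarith)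
        (mul_nonneg hla.le hbP.le),
      mul_le_mul_of_nonneg_left
        (mul_le_mul_of_nonneg_right hPt (show (0:ℝ) ≤ 1 - w by linarith)) hla.le]

include hlam hc0 hc hz hcube in
lemma site_lt_one (i : Fin m) (s : Fin (n i + 1)) (t0 t1 bQ : ℝ)
    (ht0 : 0 ≤ t0) (h01 : t0 < t1) (hbQ : 0 < bQ)
    (hQb : ∀ t ∈ Set.Icc t0 t1,
      bQ ≤ 1 - rfmExt (netInput lam c0 c (z t) i) (z t i) (s.succ.succ)) :
    z t1 i s < 1 := by
  have hla := hlam i s.castSucc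
  have hlb := hlam i s.succ
  have hU := Unet_nonneg' (lam := lam) (c := c) i hc hlam
  set Ub : ℝ := c0 i + Unet lam c i + 1 with hUb
  have hUbpos : 0 < Ub := by have := hc0 i; rw [hUb]; linarith
  set ε : ℝ := min (1/2) (lam i s.succ * bQ / (4 * lam i s.castSucc * Ub)) with hε
  have hεpos : 0 < ε := lt_min (by norm_num) (by positivity)
  have hεhalf : ε ≤ 1/2 := min_le_left _ _
  have h4 : lam i s.castSucc * Ub * ε ≤ lam i s.succ * bQ / 4 := by
    calc lam i s.castSucc * Ub * ε
        ≤ lam i s.castSucc * Ub * (lam i s.succ * bQ / (4 * lam i s.castSucc * Ub)) :=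
          mul_le_mul_of_nonneg_left (min_le_right _ _) (by positivity)
      _ = lam i s.succ * bQ / 4 := by field_simp
  have hfin : 0 < 1 - z t1 i s := by
    apply pos_lemma (w := fun t => 1 - z t i s)
      (w' := fun t => -(netVF lam c0 c (z t) i s))
      h01 hεpos (show (0:ℝ) < lam i s.succ * bQ / 4 by positivity)
    · intro t ht
      exact (coord_deriv (hz t (le_trans ht0 ht.1)) i s).const_sub 1
    · linarith [(hcube t0 ht0 i s).2]
    · intro t ht hle
      have htpos : 0 ≤ t := le_trans ht0 ht.1
      have hcubet := hcube t htpos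
      have hPle := ext_le hlam hc0 hc (z t) hcubet i (s.castSucc.castSucc)
      have hPge := ext_nonneg hlam hc0 hc (z t) hcubet i (s.castSucc.castSucc)
      have hQt := hQb t ht
      have hw0 := (hcubet i s).1
      have hw1 := (hcubet i s).2
      rw [netVF, vf_eq]
      set P := rfmExt (netInput lam c0 c (z t) i) (z t i) (s.castSucc.castSucc)
      set Q := rfmExt (netInput lam c0 c (z t) i) (z t i) (s.succ.succ)
      set w := z t i s
      -- goal : lam i s.succ * bQ / 4 ≤ -(lam_a * P * (1-w) - lam_b * w * (1-Q))
      nlinarith [mul_le_mul_of_nonneg_right hQt (show (0:ℝ) ≤ w by linarith),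
        mul_le_mul_of_nonneg_left (show (1:ℝ)/2 ≤ w by linarith)
          (mul_nonneg hlb.le hbQ.le),
        mul_le_mul_of_nonneg_left
          (mul_le_mul_of_nonneg_right hPle (show (0:ℝ) ≤ 1 - w by linarith)) hla.le,
        mul_le_mul_of_nonneg_left hle (by positivity : (0:ℝ) ≤ lam i s.castSucc * Ub),
        mul_nonneg (mul_nonneg hla.le hPge) (show (0:ℝ) ≤ 1 - w by linarith),
        mul_le_mul_of_nonneg_left
          (mul_le_mul_of_nonneg_right hQt (show (0:ℝ) ≤ w by linarith)) hlb.le]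
  linarith
end Cube

section Ind
variable {m : ℕ} {n : Fin m → ℕ} {lam : ∀ i : Fin m, Fin (n i + 2) → ℝ}
  {c0 : Fin m → ℝ} {c : Fin m → Fin m → ℝ}
  (hlam : ∀ (i : Fin m) (j : Fin (n i + 2)), 0 < lam i j)
  (hc0 : ∀ i, 0 < c0 i) (hc : ∀ i k, 0 ≤ c i k)
  {z : ℝ → ∀ i : Fin m, Fin (n i + 1) → ℝ}
  (hz : ∀ t : ℝ, 0 ≤ t → HasDerivAt z (netVF lam c0 c (z t)) t)
  (hcube : ∀ t : ℝ, 0 ≤ t → ∀ i j, z t i j ∈ Set.Icc (0:ℝ) 1)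

include hlam hc0 hc hz hcube in
lemma low_all (i : Fin m) (j : Fin (n i + 1)) : ∀ t : ℝ, 0 < t → 0 < z t i j := by
  induction j using Fin.induction with
  | zero =>
    intro t ht
    apply site_pos hlam hc0 hc hz hcube i 0 0 t (c0 i) le_rfl ht (hc0 i)
    intro u hu
    rw [extP_zero]
    exact netInput_ge hlam hc (z u) (hcube u hu.1) i
  | succ j IH =>
    intro t ht
    have ht0 : (0:ℝ) < t/2 := by linarith
    have hsub : Set.Icc (t/2) t ⊆ Set.Ici (0:ℝ) := fun u hu => le_trans ht0.le hu.1
    have cont : ContinuousOn (fun u => z u i j.castSucc) (Set.Icc (t/2) t) :=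
      fun u hu => (coord_deriv (hz u (hsub hu)) i j.castSucc).continuousAt.continuousWithinAt
    obtain ⟨smin, hsmin, hmin⟩ := isCompact_Icc.exists_isMinOn
      ⟨t/2, by constructor <;> linarith⟩ cont
    have hb : 0 < z smin i j.castSucc := IH smin (lt_of_lt_of_le ht0 hsmin.1)
    apply site_pos hlam hc0 hc hz hcube i j.succ (t/2) t _ ht0.le (by linarith) hb
    intro u hu
    rw [extP_succ]
    exact isMinOn_iff.mp hmin u hu

include hlam hc0 hc hz hcube in
lemma hi_all (i : Fin m) (j : Fin (n i + 1)) : ∀ t : ℝ, 0 < t → z t i j < 1 := by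
  induction j using Fin.reverseInduction with
  | last =>
    intro t ht
    apply site_lt_one hlam hc0 hc hz hcube i (Fin.last (n i)) 0 t 1 le_rfl ht one_pos
    intro u _
    rw [extQ_last]
    norm_num
  | cast j IH =>
    intro t ht
    have ht0 : (0:ℝ) < t/2 := by linarith
    have hsub : Set.Icc (t/2) t ⊆ Set.Ici (0:ℝ) := fun u hu => le_trans ht0.le hu.1
    have cont : ContinuousOn (fun u => 1 - z u i j.succ) (Set.Icc (t/2) t) :=
      fun u hu => ((coord_deriv (hz u (hsub hu)) i j.succ).const_sub 1).continuousAt.continuousWithinAt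
    obtain ⟨smin, hsmin, hmin⟩ := isCompact_Icc.exists_isMinOn
      ⟨t/2, by constructor <;> linarith⟩ cont
    have hb : 0 < 1 - z smin i j.succ := by
      have := IH smin (lt_of_lt_of_le ht0 hsmin.1)
      linarith
    apply site_lt_one hlam hc0 hc hz hcube i j.castSucc (t/2) t _ ht0.le (by linarith) hb
    intro u hu
    rw [extQ_cast]
    exact isMinOn_iff.mp hmin u hu
end Ind

end Aux

/-- For the network of `m` RFMIOs with feedback, the closed cube
`[0,1]^ℓ` is an invariant set of the dynamics, and solutions starting in the closed
cube immediately enter the open cube `(0,1)^ℓ`. -/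
theorem network_cube_invariant
    (m : ℕ) (n : Fin m → ℕ)
    (lam : ∀ i : Fin m, Fin (n i + 2) → ℝ)
    (hlam : ∀ (i : Fin m) (j : Fin (n i + 2)), 0 < lam i j)
    (c0 : Fin m → ℝ) (hc0 : ∀ i, 0 < c0 i)
    (c : Fin m → Fin m → ℝ) (hc : ∀ i k, 0 ≤ c i k)
    (z : ℝ → ∀ i : Fin m, Fin (n i + 1) → ℝ)
    (hz : ∀ t : ℝ, 0 ≤ t → HasDerivAt z (netVF lam c0 c (z t)) t)
    (hz0 : ∀ i j, z 0 i j ∈ Set.Icc (0 : ℝ) 1) :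
    (∀ t : ℝ, 0 ≤ t → ∀ i j, z t i j ∈ Set.Icc (0 : ℝ) 1) ∧
    (∀ t : ℝ, 0 < t → ∀ i j, z t i j ∈ Set.Ioo (0 : ℝ) 1) := by
  have hcube := part1_global hlam hc0 hc hz hz0
  refine ⟨hcube, fun t ht i j => ⟨?_, ?_⟩⟩
  · exact low_all hlam hc0 hc hz hcube i j t ht
  · exact hi_all hlam hc0 hc hz hcube i j t ht
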